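/- Let E be a directed graph on a vertex type V that admits a topological order, and let v, w be vertices. Then the graph E + (v,w) contains a cycle (i.e., there exists a vertex x with Relation.TransGen (E + (v,w)) x x) if and only if there is a path from w to v under E. -/

import Mathlib

/-- If `E` admits a topological order, then adding the arc `(v,w)` creates a
cycle if and only if there is a path from `w` to `v` in `E`. -/
theorem addArc_cycle_iff_path
    {V α : Type*} [LinearOrder α]
    (E : V → V → Prop) (O : V → α)
    (hOinj : Function.Injective O)
    (hOtopo : ∀ a b, E a b → O a < O b)
    (v w : V) :
    (∃ x, Relation.TransGen (fun a b => E a b ∨ (a = v ∧ b = w)) x x) ↔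
      Relation.ReflTransGen E w v := by
  constructor
  · rintro ⟨x, hx⟩
    have key : ∀ a b, Relation.TransGen (fun a b => E a b ∨ (a = v ∧ b = w)) a b →
        Relation.TransGen E a b ∨
          (Relation.ReflTransGen E a v ∧ Relation.ReflTransGen E w b) := by
      intro a b h
      induction h with
      | single h =>
        rcases h with h | ⟨rfl, rfl⟩
        · exact Or.inl (.single h)
        · exact Or.inr ⟨.refl, .refl⟩
      | tail h hstep ih =>
        rcases hstep with hstep | ⟨rfl, rfl⟩
        · rcases ih with ih | ⟨h1, h2⟩
          · exact Or.inl (ih.tail hstep)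
          · exact Or.inr ⟨h1, h2.tail hstep⟩
        · rcases ih with ih | ⟨h1, h2⟩
          · exact Or.inr ⟨ih.to_reflTransGen, .refl⟩
          · exact Or.inr ⟨h1, .refl⟩
    rcases key x x hx with h | ⟨h1, h2⟩
    · exfalso
      have mono : ∀ a b, Relation.TransGen E a b → O a < O b := by
        intro a b hab
        induction hab with
        | single h => exact hOtopo _ _ h
        | tail _ hstep ih => exact ih.trans (hOtopo _ _ hstep)
      exact lt_irrefl _ (mono x x h)
    · exact h2.trans h1
  · intro h
    refine ⟨v, ?_⟩
    have step : Relation.TransGen (fun a b => E a b ∨ (a = v ∧ b = w)) v w :=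
      .single (Or.inr ⟨rfl, rfl⟩)
    exact step.trans_left (Relation.ReflTransGen.mono (fun a b h => Or.inl h) w v h)
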